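/- Suppose real numbers SH_I, SH_R, SH_T satisfy ξ₊(SH_R − SH_I) = −ξ₋ SH_T and μ₊ξ₊²(SH_R + SH_I) = μ₋ξ₋² SH_T, with ξ₊, ξ₋, μ₊, μ₋ > 0 and writing μ± = ρ± c_{s,±}². Then ρ₊ c_{s,+}² ξ₊³ (SH_R² − SH_I²) + ρ₋ c_{s,-}² ξ₋³ SH_T² = 0; in particular if SH_I ≠ 0 then SH_T ≠ 0. -/

import Mathlib

/-- SH energy identity at an elastic interface: if
`ξ₊(SH_R − SH_I) = −ξ₋ SH_T` and `μ₊ξ₊²(SH_R + SH_I) = μ₋ξ₋² SH_T` with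
`μ± = ρ± c_{s,±}²`, then
`ρ₊c_{s,+}²ξ₊³(SH_R² − SH_I²) + ρ₋c_{s,-}²ξ₋³SH_T² = 0`; in particular if
`SH_I ≠ 0` then `SH_T ≠ 0`. -/
theorem stmt_17 (ρp ρm csp csm ξp ξm SHI SHR SHT : ℝ)
    (hρp : 0 < ρp) (hρm : 0 < ρm) (hcsp : 0 < csp) (hcsm : 0 < csm)
    (hξp : 0 < ξp) (hξm : 0 < ξm)
    (h1 : ξp * (SHR - SHI) = -ξm * SHT)
    (h2 : (ρp * csp ^ 2) * ξp ^ 2 * (SHR + SHI) = (ρm * csm ^ 2) * ξm ^ 2 * SHT) :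
    ρp * csp ^ 2 * ξp ^ 3 * (SHR ^ 2 - SHI ^ 2)
        + ρm * csm ^ 2 * ξm ^ 3 * SHT ^ 2 = 0 ∧
    (SHI ≠ 0 → SHT ≠ 0) := by
  constructor
  · have key := congrArg₂ (· * ·) h1 h2
    nlinarith [key]
  · intro hI hT
    subst hT
    have hr : SHR = SHI := by
      have := h1; nlinarith
    have hr2 : SHR = -SHI := by
      have hp := mul_pos (mul_pos hρp (pow_pos hcsp 2)) (pow_pos hξp 2)
      nlinarith
    apply hI; linarith
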